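/- Let S ⊆ [0, ∞) be closed with complement S* = [0, ∞) \ S open and additive, S bounded with L = sup S, and define h_S : [0, L] → ℝ by h_S(x) = 0 if x ∈ ∂S, h_S(x) = dist(x, ∂S) if x ∈ interior of S, and h_S(x) = −dist(x, ∂S) if x ∈ S*. Then for every s* ∈ S* and every x with 0 ≤ x and x + s* ≤ L, h_S(x + s*) ≠ h_S(x). -/

import Mathlib

open Metric Set

/-- If `u ∈ S` and `v ∉ S` with `S` closed, there is a frontier point of `S`
between `u` and `v`. -/
lemma hopf_aux_frontier_between {S : Set ℝ} (hScl : IsClosed S) {u v : ℝ}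
    (hu : u ∈ S) (hv : v ∉ S) : ∃ p ∈ Set.uIcc u v, p ∈ frontier S := by
  rcases le_total u v with huv | huv
  · set T := S ∩ Set.Icc u v with hT
    have hTne : T.Nonempty := ⟨u, hu, le_refl u, huv⟩
    have hTcl : IsClosed T := hScl.inter isClosed_Icc
    have hTbdd : BddAbove T := ⟨v, fun t ht => ht.2.2⟩
    set p := sSup T with hp
    have hpT : p ∈ T := hTcl.csSup_mem hTne hTbdd
    have hpv : p < v := lt_of_le_of_ne hpT.2.2 (fun h => hv (h ▸ hpT.1))
    refine ⟨p, by rw [Set.uIcc_of_le huv]; exact hpT.2, subset_closure hpT.1, ?_⟩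
    intro hint
    obtain ⟨r, hr, hball⟩ := Metric.mem_nhds_iff.mp (mem_interior_iff_mem_nhds.mp hint)
    have h0 : 0 < min (r/2) ((v - p)/2) := lt_min (by linarith) (by linarith)
    have h1 := min_le_left (r/2) ((v - p)/2)
    have h2 := min_le_right (r/2) ((v - p)/2)
    have hmem : p + min (r/2) ((v - p)/2) ∈ S := hball (by
      rw [Metric.mem_ball, Real.dist_eq, abs_of_nonneg (by linarith)]; linarith)
    have hmT : p + min (r/2) ((v - p)/2) ∈ T :=
      ⟨hmem, by constructor <;> [linarith [hpT.2.1]; linarith]⟩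
    have := le_csSup hTbdd hmT
    linarith
  · set T := S ∩ Set.Icc v u with hT
    have hTne : T.Nonempty := ⟨u, hu, huv, le_refl u⟩
    have hTcl : IsClosed T := hScl.inter isClosed_Icc
    have hTbdd : BddBelow T := ⟨v, fun t ht => ht.2.1⟩
    set p := sInf T with hp
    have hpT : p ∈ T := hTcl.csInf_mem hTne hTbdd
    have hpv : v < p := lt_of_le_of_ne hpT.2.1 (fun h => hv (h ▸ hpT.1))
    refine ⟨p, by rw [Set.uIcc_of_ge huv]; exact hpT.2, subset_closure hpT.1, ?_⟩
    intro hint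
    obtain ⟨r, hr, hball⟩ := Metric.mem_nhds_iff.mp (mem_interior_iff_mem_nhds.mp hint)
    have h0 : 0 < min (r/2) ((p - v)/2) := lt_min (by linarith) (by linarith)
    have h1 := min_le_left (r/2) ((p - v)/2)
    have h2 := min_le_right (r/2) ((p - v)/2)
    have hmem : p - min (r/2) ((p - v)/2) ∈ S := hball (by
      rw [Metric.mem_ball, Real.dist_eq, abs_of_nonpos (by linarith)]; linarith)
    have hmT : p - min (r/2) ((p - v)/2) ∈ T :=
      ⟨hmem, by constructor <;> [linarith; linarith [hpT.2.2]]⟩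
    have := csInf_le hTbdd hmT
    linarith

/-- Additivity of distances along a subsegment of `ℝ`. -/
lemma hopf_aux_uIcc_dist {u v w : ℝ} (h : w ∈ Set.uIcc u v) :
    dist u w + dist w v = dist u v := by
  rcases Set.mem_uIcc.mp h with ⟨h1, h2⟩ | ⟨h1, h2⟩
  · rw [Real.dist_eq, Real.dist_eq, Real.dist_eq, abs_of_nonpos (by linarith),
      abs_of_nonpos (by linarith), abs_of_nonpos (by linarith)]
    ring
  · rw [Real.dist_eq, Real.dist_eq, Real.dist_eq, abs_of_nonneg (by linarith),
      abs_of_nonneg (by linarith), abs_of_nonneg (by linarith)]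
    ring

theorem hopf_theorem_II_exclusion (S Sstar : Set ℝ) (hSclosed : IsClosed S)
    (hSsub : S ⊆ Set.Ici 0) (hSstar : Sstar = Set.Ici (0 : ℝ) \ S)
    (hopen : IsOpen Sstar) (hadd : ∀ p ∈ Sstar, ∀ q ∈ Sstar, p + q ∈ Sstar)
    (hne : S.Nonempty) (hbdd : BddAbove S) (L : ℝ) (hL : L = sSup S)
    (hS : ℝ → ℝ)
    (hdef_bd : ∀ x ∈ frontier S, hS x = 0)
    (hdef_int : ∀ x ∈ interior S, hS x = Metric.infDist x (frontier S))
    (hdef_star : ∀ x ∈ Sstar, hS x = -Metric.infDist x (frontier S)) :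
    ∀ sstar ∈ Sstar, ∀ x : ℝ, 0 ≤ x → x + sstar ≤ L → hS (x + sstar) ≠ hS x := by
  -- basic facts about `Sstar`
  have hstar_not : ∀ u ∈ Sstar, u ∉ S := by
    intro u hu; rw [hSstar] at hu; exact hu.2
  have hstar_nn : ∀ u ∈ Sstar, (0:ℝ) ≤ u := by
    intro u hu; rw [hSstar] at hu; exact hu.1
  -- `0 ∈ S`
  have h0S : (0:ℝ) ∈ S := by
    by_contra h0
    have h0star : (0:ℝ) ∈ Sstar := by rw [hSstar]; exact ⟨Set.mem_Ici.mpr (le_refl 0), h0⟩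
    obtain ⟨ε, hε, hball⟩ := Metric.isOpen_iff.mp hopen 0 h0star
    have key : ∀ n : ℕ, ∀ t : ℝ, 0 ≤ t → t ≤ n * (ε/2) → t ∈ Sstar := by
      intro n
      induction n with
      | zero =>
        intro t ht htle
        have : t = 0 := le_antisymm (by simpa using htle) ht
        rwa [this]
      | succ n ih =>
        intro t ht htle
        by_cases htε : t < ε
        · exact hball (by rw [Metric.mem_ball, Real.dist_eq, sub_zero, abs_of_nonneg ht]; exact htε)
        · push_neg at htε
          have h1 : (0:ℝ) ≤ t - ε/2 := by linarith
          have h2 : t - ε/2 ≤ n * (ε/2) := by push_cast at htle ⊢; linarith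
          have h3 : t - ε/2 ∈ Sstar := ih _ h1 h2
          have h4 : ε/2 ∈ Sstar := hball (by
            rw [Metric.mem_ball, Real.dist_eq, sub_zero, abs_of_nonneg (by linarith)]; linarith)
          have := hadd _ h3 _ h4
          rwa [sub_add_cancel] at this
    obtain ⟨s, hs⟩ := hne
    obtain ⟨n, hn⟩ := exists_nat_ge (s / (ε/2))
    have hsn : s ≤ n * (ε/2) := by
      rw [div_le_iff₀ (by linarith)] at hn; linarith
    exact hstar_not s (key n s (hSsub hs) hsn) hs
  have hBddBelow : BddBelow S := ⟨0, fun s hs => hSsub hs⟩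
  have hScomp : IsCompact S := by
    rw [isCompact_iff_isClosed_bounded]
    exact ⟨hSclosed, isBounded_iff_bddBelow_bddAbove.mpr ⟨hBddBelow, hbdd⟩⟩
  have hfsub : frontier S ⊆ S := hSclosed.frontier_subset
  have h0f : (0:ℝ) ∈ frontier S := by
    constructor
    · exact subset_closure h0S
    · intro hint
      obtain ⟨δ, hδ, hball⟩ := Metric.mem_nhds_iff.mp (mem_interior_iff_mem_nhds.mp hint)
      have : -(δ/2) ∈ S := hball (by
        rw [Metric.mem_ball, Real.dist_eq, sub_zero, abs_of_nonpos (by linarith)]; linarith)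
      have := hSsub this
      simp only [Set.mem_Ici] at this
      linarith
  have hfne : (frontier S).Nonempty := ⟨0, h0f⟩
  have hfcomp : IsCompact (frontier S) := hScomp.of_isClosed_subset isClosed_frontier hfsub
  intro sstar hsstar x hx hxL hEq
  set y := x + sstar with hy
  -- translation of frontier points by `sstar` lands in `Sstar`
  have Klemma : ∀ b ∈ frontier S, b + sstar ∈ Sstar := by
    intro b hb
    rcases eq_or_lt_of_le (Set.mem_Ici.mp (hSsub (hfsub hb)) : (0:ℝ) ≤ b) with hb0 | hb0
    · rw [← hb0, zero_add]; exact hsstar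
    · obtain ⟨ε, hε, hball⟩ := Metric.isOpen_iff.mp hopen sstar hsstar
      have hbc : b ∈ closure Sᶜ := by
        rw [frontier_eq_closure_inter_closure] at hb; exact hb.2
      obtain ⟨u, huc, hud⟩ := Metric.mem_closure_iff.mp hbc (min ε b) (lt_min hε hb0)
      rw [Real.dist_eq] at hud
      have habs := abs_lt.mp hud
      have hm1 := min_le_left ε b
      have hm2 := min_le_right ε b
      have hu0 : 0 < u := by linarith [habs.2]
      have hustar : u ∈ Sstar := by rw [hSstar]; exact ⟨le_of_lt hu0, huc⟩
      have h2 : sstar + (b - u) ∈ Sstar := hball (by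
        rw [Metric.mem_ball, Real.dist_eq, abs_lt]
        constructor <;> [linarith [habs.1]; linarith [habs.2]])
      have h3 := hadd u hustar _ h2
      have e : u + (sstar + (b - u)) = b + sstar := by ring
      rwa [e] at h3
  -- sign facts
  have hpos : ∀ u ∈ interior S, 0 < hS u := by
    intro u hu
    rw [hdef_int u hu]
    exact (IsClosed.notMem_iff_infDist_pos isClosed_frontier hfne).mp (fun hf => hf.2 hu)
  have hneg : ∀ u ∈ Sstar, hS u < 0 := by
    intro u hu
    rw [hdef_star u hu, neg_lt, neg_zero]
    exact (IsClosed.notMem_iff_infDist_pos isClosed_frontier hfne).mp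
      (fun hf => hstar_not u hu (hfsub hf))
  have region : ∀ u : ℝ, 0 ≤ u → u ∈ frontier S ∨ u ∈ interior S ∨ u ∈ Sstar := by
    intro u hu
    by_cases huS : u ∈ S
    · by_cases hui : u ∈ interior S
      · exact Or.inr (Or.inl hui)
      · exact Or.inl ⟨subset_closure huS, hui⟩
    · exact Or.inr (Or.inr (by rw [hSstar]; exact ⟨hu, huS⟩))
  have hy0 : 0 ≤ y := by have := hstar_nn sstar hsstar; simp only [hy]; linarith
  rcases region x hx with hxf | hxi | hxs
  · -- Case A : x on the boundary
    have hx0 : hS x = 0 := hdef_bd x hxf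
    have hyst : y ∈ Sstar := Klemma x hxf
    have := hneg y hyst
    rw [hEq, hx0] at this
    exact lt_irrefl 0 this
  · -- Case B : x in the interior of S
    have hxpos := hpos x hxi
    have hyi : y ∈ interior S := by
      rcases region y hy0 with hyf | hyi | hys
      · exfalso; rw [hdef_bd y hyf] at hEq; linarith
      · exact hyi
      · exfalso; have := hneg y hys; linarith
    obtain ⟨b, hbf, hbd⟩ := hfcomp.exists_infDist_eq_dist hfne x
    have hpstar : b + sstar ∈ Sstar := Klemma b hbf
    have hpS : b + sstar ∉ S := hstar_not _ hpstar
    obtain ⟨p', hp'I, hp'f⟩ := hopf_aux_frontier_between hSclosed (interior_subset hyi) hpS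
    have hsum := hopf_aux_uIcc_dist hp'I
    have hp'ne : p' ≠ b + sstar := fun h => hpS (h ▸ hfsub hp'f)
    have hdpos : 0 < dist p' (b + sstar) := dist_pos.mpr hp'ne
    have hyp : dist y (b + sstar) = dist x b := by
      rw [Real.dist_eq, Real.dist_eq, hy]
      congr 1
      ring
    have hle : Metric.infDist y (frontier S) ≤ dist y p' := Metric.infDist_le_dist_of_mem hp'f
    have heqd : Metric.infDist y (frontier S) = Metric.infDist x (frontier S) := by
      rw [← hdef_int y hyi, ← hdef_int x hxi, hEq]
    rw [heqd, hbd] at hle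
    linarith
  · -- Case C : x in Sstar
    have hxneg := hneg x hxs
    have hys : y ∈ Sstar := by
      rcases region y hy0 with hyf | hyi | hys
      · exfalso; rw [hdef_bd y hyf] at hEq; linarith
      · exfalso; have := hpos y hyi; linarith
      · exact hys
    -- infDist to S equals infDist to the frontier for points of Sstar
    have hW : ∀ u ∈ Sstar, Metric.infDist u S = Metric.infDist u (frontier S) := by
      intro u hu
      have huS : u ∉ S := hstar_not u hu
      apply le_antisymm
      · exact Metric.infDist_le_infDist_of_subset hfsub hfne
      · obtain ⟨a, haS, had⟩ := hScomp.exists_infDist_eq_dist hne u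
        obtain ⟨p, hpI, hpf⟩ := hopf_aux_frontier_between hSclosed haS huS
        have hsum := hopf_aux_uIcc_dist hpI
        have h1 : Metric.infDist u (frontier S) ≤ dist u p := Metric.infDist_le_dist_of_mem hpf
        have h2 : dist u p ≤ dist u a := by
          rw [dist_comm u p, dist_comm u a]
          have := dist_nonneg (x := a) (y := p)
          linarith
        rw [had]
        linarith
    have hdeq : Metric.infDist y (frontier S) = Metric.infDist x (frontier S) := by
      have e1 := hdef_star x hxs
      have e2 := hdef_star y hys
      rw [e1, e2] at hEq
      linarith
    set d := Metric.infDist x S with hd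
    have hdx2 : Metric.infDist y S = d := by rw [hW y hys, hdeq, ← hW x hxs]
    have hdpos : 0 < d := (IsClosed.notMem_iff_infDist_pos hSclosed hne).mp (hstar_not x hxs)
    have hdlex : d ≤ x := by
      have := Metric.infDist_le_dist_of_mem (x := x) h0S
      rw [Real.dist_eq, sub_zero, abs_of_nonneg hx] at this
      exact this
    obtain ⟨a, haS, had⟩ := hScomp.exists_infDist_eq_dist hne y
    rw [hdx2] at had
    obtain ⟨ε, hε, hball⟩ := Metric.isOpen_iff.mp hopen sstar hsstar
    set δ := min (ε/2) d with hδ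
    have hδ0 : 0 < δ := lt_min (by linarith) hdpos
    have hδε : δ < ε := lt_of_le_of_lt (min_le_left _ _) (by linarith)
    have hδd : δ ≤ d := min_le_right _ _
    have htrans : ∀ t ∈ Sstar, ∀ b ∈ S, t ≤ b → b - t ∈ S := by
      intro t ht b hb htb
      by_contra hbt
      have hbts : b - t ∈ Sstar := by rw [hSstar]; exact ⟨sub_nonneg.mpr htb, hbt⟩
      have := hadd _ hbts t ht
      rw [sub_add_cancel] at this
      exact hstar_not b this hb
    have habs : a = y - d ∨ a = y + d := by
      rw [Real.dist_eq] at had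
      rcases abs_eq (le_of_lt hdpos) |>.mp (had.symm) with h | h
      · left; linarith
      · right; linarith
    rcases habs with ha' | ha'
    · -- nearest S point below y
      have ht : sstar - δ ∈ Sstar := hball (by
        rw [Metric.mem_ball, Real.dist_eq, abs_of_nonpos (by linarith)]; linarith)
      have htle : sstar - δ ≤ a := by rw [ha', hy]; linarith
      have hmem : a - (sstar - δ) ∈ S := htrans _ ht a haS htle
      have : d ≤ dist x (a - (sstar - δ)) := Metric.infDist_le_dist_of_mem hmem
      rw [Real.dist_eq, ha', hy] at this
      have e : x - (x + sstar - d - (sstar - δ)) = d - δ := by ring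
      rw [e, abs_of_nonneg (by linarith)] at this
      linarith
    · -- nearest S point above y
      have ht : sstar + δ ∈ Sstar := hball (by
        rw [Metric.mem_ball, Real.dist_eq, abs_of_nonneg (by linarith)]; linarith)
      have htle : sstar + δ ≤ a := by rw [ha', hy]; linarith
      have hmem : a - (sstar + δ) ∈ S := htrans _ ht a haS htle
      have : d ≤ dist x (a - (sstar + δ)) := Metric.infDist_le_dist_of_mem hmem
      rw [Real.dist_eq, ha', hy] at this
      have e : x - (x + sstar + d - (sstar + δ)) = δ - d := by ring
      rw [e, abs_of_nonpos (by linarith)] at this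
      linarith
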